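/- For a finite nonempty subset A of a commutative group Z, σ(A) = δ(A)² if and only if σ(A) = 1. Equivalently: |A+A|·|A| = |A−A|² if and only if |A+A| = |A|. -/

import Mathlib

open Pointwise Finset

section AuxSumDiff
variable {Z : Type*} [AddCommGroup Z] [DecidableEq Z]

lemma my_ks_step (U A W : Finset Z) (z : Z)
    (hA : ∀ X ⊆ U, #(U + A) * #X ≤ #(X + A) * #U) :
    #(U + A) * #(U + W) + #(U + A + insert z W) * #U ≤
      #(U + A) * #(U + insert z W) + #(U + A + W) * #U := by
  classical
  set U₁ := U ∩ ((U + W) - {z}) with hU₁def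
  have hinter : U₁ + {z} = (U + {z}) ∩ (U + W) := by
    ext v
    simp only [hU₁def, mem_add, mem_inter, mem_sub, mem_singleton]
    constructor
    · rintro ⟨y, ⟨hyU, b, hb, c, rfl, rfl⟩, z1, rfl, rfl⟩
      exact ⟨⟨b - z1, hyU, z1, rfl, by abel⟩, by simpa using hb⟩
    · rintro ⟨⟨y, hy, z1, rfl, rfl⟩, hv⟩
      exact ⟨y, ⟨hy, y + z1, hv, z1, rfl, by abel⟩, z1, rfl, rfl⟩
  have hb : #(U + insert z W) + #U₁ = #U + #(U + W) := by
    have h1 : U + insert z W = (U + {z}) ∪ (U + W) := by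
      rw [insert_eq, add_union]
    rw [h1, ← card_add_singleton U₁ z, hinter, card_union_add_card_inter,
      card_add_singleton]
  have hUzW : U₁ + {z} ⊆ U + W := hinter ▸ inter_subset_right
  have ha : #(U + A + insert z W) + #(U₁ + A) ≤ #(U + A) + #(U + A + W) := by
    have h1 : U + A + insert z W = (U + A + {z}) ∪ (U + A + W) := by
      rw [insert_eq, add_union]
    have h2 : U₁ + A + {z} ⊆ (U + A + {z}) ∩ (U + A + W) := by
      refine subset_inter (add_subset_add_right (add_subset_add_right inter_subset_left)) ?_
      calc U₁ + A + {z} = U₁ + {z} + A := by rw [add_right_comm]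
        _ ⊆ (U + W) + A := add_subset_add_right hUzW
        _ = U + A + W := by rw [add_right_comm]
    calc #(U + A + insert z W) + #(U₁ + A)
        = #((U + A + {z}) ∪ (U + A + W)) + #(U₁ + A + {z}) := by
          rw [h1, card_add_singleton]
      _ ≤ #((U + A + {z}) ∪ (U + A + W)) + #((U + A + {z}) ∩ (U + A + W)) :=
          Nat.add_le_add_left (card_le_card h2) _
      _ = #(U + A + {z}) + #(U + A + W) := card_union_add_card_inter _ _
      _ = #(U + A) + #(U + A + W) := by rw [card_add_singleton]
  have hc : #(U + A) * #U₁ ≤ #(U₁ + A) * #U := hA U₁ inter_subset_left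
  have ha' : #(U + A + insert z W) * #U + #(U₁ + A) * #U
      ≤ #(U + A) * #U + #(U + A + W) * #U := by
    calc #(U + A + insert z W) * #U + #(U₁ + A) * #U
        = (#(U + A + insert z W) + #(U₁ + A)) * #U := by ring
      _ ≤ (#(U + A) + #(U + A + W)) * #U := Nat.mul_le_mul_right _ ha
      _ = #(U + A) * #U + #(U + A + W) * #U := by ring
  have hb' : #(U + A) * #(U + insert z W) + #(U + A) * #U₁
      = #(U + A) * #U + #(U + A) * #(U + W) := by
    rw [← Nat.mul_add, ← Nat.mul_add, hb]
  linarith [ha', hb', hc]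

lemma my_gmono (U A W₀ : Finset Z)
    (hA : ∀ X ⊆ U, #(U + A) * #X ≤ #(X + A) * #U) (C : Finset Z) :
    #(U + A) * #(U + W₀) + #(U + A + (W₀ ∪ C)) * #U ≤
      #(U + A) * #(U + (W₀ ∪ C)) + #(U + A + W₀) * #U := by
  classical
  induction C using Finset.induction_on with
  | empty => rw [union_empty]
  | @insert z C hz ih =>
    rw [union_insert]
    have hks := my_ks_step U A (W₀ ∪ C) z hA
    linarith [hks, ih]

lemma my_negadd (A : Finset Z) : -A + A = A - A := by
  ext v
  simp only [mem_add, mem_neg, mem_sub]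
  constructor
  · rintro ⟨b, ⟨a, ha, rfl⟩, c, hc, rfl⟩
    exact ⟨c, hc, a, ha, by abel⟩
  · rintro ⟨b, hb, c, hc, rfl⟩
    exact ⟨-c, ⟨c, hc, rfl⟩, b, hb, by abel⟩

lemma my_fiber_sum (A : Finset Z) :
    ∑ t ∈ (A - A), #(A ∩ (A + {t})) = #A * #A := by
  classical
  have h1 : #(A ×ˢ A) = ∑ t ∈ (A - A), #({p ∈ A ×ˢ A | p.1 - p.2 = t}) := by
    apply card_eq_sum_card_fiberwise
    intro p hp
    rw [mem_coe, mem_product] at hp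
    exact sub_mem_sub hp.1 hp.2
  have h2 : ∀ t : Z, #({p ∈ A ×ˢ A | p.1 - p.2 = t}) = #(A ∩ (A + {t})) := by
    intro t
    apply card_bij (fun p _ => p.1)
    · intro p hp
      rw [mem_filter, mem_product] at hp
      refine mem_inter.2 ⟨hp.1.1, mem_add.2 ⟨p.2, hp.1.2, t, mem_singleton_self t, ?_⟩⟩
      rw [← hp.2]; abel
    · intro p hp q hq h
      rw [mem_filter, mem_product] at hp hq
      have : p.2 = q.2 := by
        have h1 := hp.2; have h2 := hq.2
        rw [← h] at h2
        have := h1.trans h2.symm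
        exact sub_right_injective this
      exact Prod.ext h this
    · intro a ha
      rw [mem_inter] at ha
      obtain ⟨b, hb, c, hc, hbc⟩ := mem_add.1 ha.2
      rw [mem_singleton] at hc
      subst hc
      refine ⟨(a, b), mem_filter.2 ⟨mem_product.2 ⟨ha.1, hb⟩, ?_⟩, rfl⟩
      show a - b = c
      rw [← hbc]; abel
  rw [Finset.card_product] at h1
  rw [Finset.sum_congr rfl fun t _ => h2 t] at h1
  exact h1.symm

end AuxSumDiff

theorem stmt_9 {Z : Type*} [AddCommGroup Z] [DecidableEq Z] (A : Finset Z)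
    (hA : A.Nonempty) :
    (A + A).card * A.card = (A - A).card ^ 2 ↔ (A + A).card = A.card := by
  classical
  constructor
  · intro Heq
    rw [sq] at Heq
    classical
    have hk : 0 < #A := hA.card_pos
    have hd : 0 < #(A - A) := (hA.sub hA).card_pos
    have hnegA : #(-A) = #A := card_neg A
    have hAneg : (-A).Nonempty := hA.neg
    have hBmem : -A ∈ ((-A).powerset.erase ∅) :=
      mem_erase_of_ne_of_mem hAneg.ne_empty (mem_powerset_self _)
    obtain ⟨U, hUmem, hUmin⟩ := exists_min_image ((-A).powerset.erase ∅)
      (fun X => (#(X + A) : ℚ) / #X) ⟨-A, hBmem⟩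
    rw [mem_erase, mem_powerset] at hUmem
    have hUne : U.Nonempty := nonempty_iff_ne_empty.2 hUmem.1
    have hUpos : (0:ℚ) < #U := by exact_mod_cast hUne.card_pos
    have hPh : ∀ X ⊆ U, #(U + A) * #X ≤ #(X + A) * #U := by
      intro X hX
      obtain rfl | hXne := X.eq_empty_or_nonempty
      · simp
      have hXpos : (0:ℚ) < #X := by exact_mod_cast hXne.card_pos
      have h := hUmin X (mem_erase_of_ne_of_mem hXne.ne_empty
        (mem_powerset.2 (hX.trans hUmem.2)))
      rw [div_le_div_iff₀ hUpos hXpos] at h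
      exact_mod_cast h
    have hUA : #(U + A) * #A ≤ #(A - A) * #U := by
      have h := hUmin (-A) hBmem
      have hApos : (0:ℚ) < ((#(-A) : ℚ)) := by exact_mod_cast hAneg.card_pos
      rw [div_le_div_iff₀ hUpos hApos] at h
      have h' : #(U + A) * #(-A) ≤ #(-A + A) * #U := by exact_mod_cast h
      rwa [my_negadd, hnegA] at h'
    have hPetA := pluennecke_petridis_inequality_add A hPh
    rw [add_comm A U] at hPetA
    have hc0 : #(A + A) ≤ #(U + A + A) := by
      rw [add_assoc]; exact card_le_card_add_left hUne
    have hkU : #A ≤ #U := by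
      have hu : 0 < #U := hUne.card_pos
      have hpk : 0 < #(A + A) * #A := Nat.mul_pos (hA.add hA).card_pos hk
      have h1 : #(A + A) * #U ≤ #(U + A) * #(U + A) :=
        le_trans (Nat.mul_le_mul_right _ hc0) hPetA
      have e1 : (#(A + A) * #A) * (#A * #U) ≤ (#(U + A) * #A) * (#(U + A) * #A) := by
        calc (#(A + A) * #A) * (#A * #U) = (#(A + A) * #U) * (#A * #A) := by ring
          _ ≤ (#(U + A) * #(U + A)) * (#A * #A) := Nat.mul_le_mul_right _ h1
          _ = (#(U + A) * #A) * (#(U + A) * #A) := by ring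
      have e2 : (#(U + A) * #A) * (#(U + A) * #A) ≤ (#(A - A) * #U) * (#(A - A) * #U) :=
        Nat.mul_le_mul hUA hUA
      have e3 : (#(A - A) * #U) * (#(A - A) * #U) = (#(A + A) * #A) * (#U * #U) := by
        calc (#(A - A) * #U) * (#(A - A) * #U) = (#(A - A) * #(A - A)) * (#U * #U) := by ring
          _ = (#(A + A) * #A) * (#U * #U) := by rw [Heq]
      have e4 : (#(A + A) * #A) * (#A * #U) ≤ (#(A + A) * #A) * (#U * #U) :=
        le_trans e1 (e2.trans_eq e3)
      have e5 : #A * #U ≤ #U * #U := Nat.le_of_mul_le_mul_left e4 hpk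
      exact Nat.le_of_mul_le_mul_right e5 hu
    have hUeq : U = -A := eq_of_subset_of_card_le hUmem.2 (by rw [hnegA]; exact hkU)
    subst hUeq
    have hDD : #(-A + A) = #(A - A) := by rw [my_negadd]
    rw [hnegA, hDD] at hPetA
    have hmk : #(-A + A + A) * #A = #(A - A) * #(A - A) := by
      refine le_antisymm hPetA ?_
      calc #(A - A) * #(A - A) = #(A + A) * #A := Heq.symm
        _ ≤ #(-A + A + A) * #A := Nat.mul_le_mul_right _ hc0
    -- key pair bound
    have hstar : ∀ t ∈ A - A, #A * #A ≤ #(A - A) * #(A ∩ (A + {t})) := by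
      intro t ht
      obtain ⟨x, hx, y, hy, rfl⟩ := mem_sub.1 ht
      set W₀ : Finset Z := {x} ∪ {y} with hW₀
      have hWA : W₀ ∪ A = A :=
        union_eq_right.2 (union_subset (singleton_subset_iff.2 hx) (singleton_subset_iff.2 hy))
      have hg := my_gmono (-A) A W₀ hPh A
      rw [hWA, hnegA, hDD, hmk] at hg
      have hg2 : #(A - A) * #(-A + W₀) ≤ #(-A + A + W₀) * #A := by linarith
      have hI1 : #(-A + W₀) + #((-A + {x}) ∩ (-A + {y})) = #A + #A := by
        rw [hW₀, add_union, card_union_add_card_inter, card_add_singleton,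
          card_add_singleton, hnegA]
      have hI2 : #(-A + A + W₀) + #((-A + A + {x}) ∩ (-A + A + {y}))
          = #(A - A) + #(A - A) := by
        rw [hW₀, add_union, card_union_add_card_inter, card_add_singleton,
          card_add_singleton, hDD]
      have hI3 : A ⊆ (-A + A + {x}) ∩ (-A + A + {y}) := by
        intro a ha
        have hmem : ∀ w ∈ A, a ∈ -A + A + {w} := by
          intro w hw
          exact mem_add.2 ⟨a - w, mem_add.2 ⟨-w, mem_neg.2 ⟨w, hw, rfl⟩, a, ha, by abel⟩,
            w, mem_singleton_self w, by abel⟩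
        exact mem_inter.2 ⟨hmem x hx, hmem y hy⟩
      have hI4 : #((-A + {x}) ∩ (-A + {y})) = #(A ∩ (A + {x - y})) := by
        have himg : (A ∩ (A + {x - y})).image (fun a => x - a)
            = (-A + {x}) ∩ (-A + {y}) := by
          ext v
          simp only [mem_image, mem_inter, mem_add, mem_neg, mem_singleton]
          constructor
          · rintro ⟨a, ⟨haA, b, hbA, c, rfl, rfl⟩, rfl⟩
            constructor
            · exact ⟨-(b + (x - y)), ⟨b + (x - y), haA, rfl⟩, x, rfl, by abel⟩
            · exact ⟨-b, ⟨b, hbA, rfl⟩, y, rfl, by abel⟩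
          · rintro ⟨⟨b, ⟨a, ha, rfl⟩, c, hc, rfl⟩, ⟨b', ⟨a', ha', rfl⟩, c', hc', heq⟩⟩
            rw [← hc, ← hc']
            have e0 : -a' + c' - (-a + c) = 0 := sub_eq_zero.2 heq
            have e1 : a' + (c - c') = a := by
              have h3 : a' + (c - c') - a = -(-a' + c' - (-a + c)) := by abel
              rw [e0, neg_zero] at h3
              exact sub_eq_zero.1 h3
            exact ⟨a, ⟨ha, a', ha', c - c', rfl, e1⟩, by abel⟩
        rw [← himg, card_image_of_injective _ sub_right_injective]
      have hIk : #A ≤ #((-A + A + {x}) ∩ (-A + A + {y})) := card_le_card hI3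
      -- linear combination
      have m1 : #(A - A) * #(-A + W₀) + #(A - A) * #((-A + {x}) ∩ (-A + {y}))
          = #(A - A) * #A + #(A - A) * #A := by
        rw [← Nat.mul_add, ← Nat.mul_add, hI1]
      have m2 : #(-A + A + W₀) * #A + #((-A + A + {x}) ∩ (-A + A + {y})) * #A
          = #(A - A) * #A + #(A - A) * #A := by
        rw [← Nat.add_mul, ← Nat.add_mul, hI2]
      have m3 : #A * #A ≤ #((-A + A + {x}) ∩ (-A + A + {y})) * #A :=
        Nat.mul_le_mul_right _ hIk
      rw [← hI4]
      linarith
    -- endgame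
    obtain ⟨a₀, ha₀⟩ := hA
    have h0 : (0:Z) ∈ A - A := mem_sub.2 ⟨a₀, ha₀, a₀, ha₀, sub_self a₀⟩
    have hr0 : #(A ∩ (A + {(0:Z)})) = #A := by
      rw [Finset.singleton_zero, add_zero, inter_self]
    have hkd : #A ≤ #(A - A) := by
      have h := hstar 0 h0
      rw [hr0] at h
      exact Nat.le_of_mul_le_mul_right (by linarith) hk
    have hdk2 : #(A - A) ≤ #A := by
      have hsplit := Finset.add_sum_erase (A - A) (fun t => #(A ∩ (A + {t}))) h0
      rw [my_fiber_sum A, hr0] at hsplit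
      -- hsplit : #A + ∑ t ∈ (A-A).erase 0, #(A ∩ (A + {t})) = #A * #A
      have hlow : ((A - A).erase 0).card • (#A * #A)
          ≤ ∑ t ∈ (A - A).erase 0, #(A - A) * #(A ∩ (A + {t})) :=
        card_nsmul_le_sum _ _ _ (fun t ht => hstar t (mem_of_mem_erase ht))
      rw [card_erase_of_mem h0, smul_eq_mul, ← Finset.mul_sum] at hlow
      -- hlow : (#(A-A) - 1) * (#A * #A) ≤ #(A-A) * S
      set S := ∑ t ∈ (A - A).erase 0, #(A ∩ (A + {t})) with hS
      have e1 : #(A - A) * #A + #(A - A) * S = #(A - A) * (#A * #A) := by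
        rw [← Nat.mul_add, hsplit]
      have e2 : (#(A - A) - 1) * (#A * #A) + (#A * #A) = #(A - A) * (#A * #A) := by
        obtain ⟨m, hm⟩ : ∃ m, #(A - A) = m + 1 := ⟨#(A - A) - 1, (Nat.succ_pred_eq_of_pos hd).symm⟩
        rw [hm]
        simp only [Nat.add_sub_cancel]
        ring
      have e3 : #(A - A) * #A ≤ #A * #A := by linarith
      exact Nat.le_of_mul_le_mul_right
        (by calc #(A - A) * #A ≤ #A * #A := e3) hk
    have hdkeq : #(A - A) = #A := le_antisymm hdk2 hkd
    have hfin : #(A + A) * #A = #A * #A := by rw [Heq, hdkeq]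
    exact Nat.eq_of_mul_eq_mul_right hk hfin

  · -- easy direction
    intro hp
    obtain ⟨a₀, ha₀⟩ := hA
    have htrans : ∀ a ∈ A, A + {a} = A + A := by
      intro a ha
      refine (eq_of_subset_of_card_le (add_subset_add_left (singleton_subset_iff.2 ha)) ?_)
      rw [card_add_singleton, hp]
    have hshift : ∀ (s : Finset Z) (c e : Z), (s + {c}) - {e} = s - {e - c} := by
      intro s c e
      ext v
      simp only [mem_sub, mem_add, mem_singleton]
      constructor
      · rintro ⟨b, ⟨w, hw, xx, hxx, rfl⟩, yy, hyy, rfl⟩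
        exact ⟨w, hw, e - c, rfl, by rw [hxx, hyy]; abel⟩
      · rintro ⟨b, hb, z, hz, rfl⟩
        exact ⟨b + c, ⟨b, hb, c, rfl, rfl⟩, e, rfl, by rw [hz]; abel⟩
    have hsub : ∀ a ∈ A, A - {a} = A - {a₀} := by
      intro a ha
      have h1 : A - {a} = (A + {a₀}) - {a₀ + a} := by
        rw [hshift]; congr 1; rw [singleton_inj]; abel
      rw [h1, htrans a₀ ha₀, ← htrans a ha, hshift]
      congr 1; rw [singleton_inj]; abel
    have hAA : A - A = A - {a₀} := by
      apply Finset.Subset.antisymm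
      · intro v hv
        obtain ⟨b, hb, c, hc, rfl⟩ := mem_sub.1 hv
        rw [← hsub c hc]
        exact sub_mem_sub hb (mem_singleton_self c)
      · exact sub_subset_sub_left (singleton_subset_iff.2 ha₀)
    have hdk : #(A - A) = #A := by
      rw [hAA, sub_singleton, card_image_of_injective _ (sub_left_injective)]
    rw [hp, hdk, sq]
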